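/- Let N ≥ 2 and let M ⊆ ℝ^N be a Cantor set in general position with respect to all orthogonal projections. Then for every non-zero proper linear subspace H ⊆ ℝ^N, the image p_H(M) under the orthogonal projection onto H^⊥ is a Cantor set. -/

import Mathlib

noncomputable def projFiber {N : ℕ} (H : Submodule ℝ (EuclideanSpace ℝ (Fin N)))
    (M : Set (EuclideanSpace ℝ (Fin N))) (A : EuclideanSpace ℝ (Fin N)) :
    Set (EuclideanSpace ℝ (Fin N)) :=
  {B ∈ M | Hᗮ.orthogonalProjectionOnto B = Hᗮ.orthogonalProjectionOnto A}

def GenPosWrt {N : ℕ} (k : ℕ) (H : Submodule ℝ (EuclideanSpace ℝ (Fin N)))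
    (M : Set (EuclideanSpace ℝ (Fin N))) : Prop :=
  {F : Set (EuclideanSpace ℝ (Fin N)) | ∃ A ∈ M, F = projFiber H M A ∧ F.Nontrivial}.Finite ∧
  (∀ A ∈ M, (projFiber H M A).Nontrivial →
    (projFiber H M A).ncard ≤ k + 1 ∧
    AffineIndependent ℝ ((↑) : projFiber H M A → EuclideanSpace ℝ (Fin N))) ∧
  (∀ 𝒮 : Finset (Set (EuclideanSpace ℝ (Fin N))),
    (∀ F ∈ 𝒮, ∃ A ∈ M, F = projFiber H M A ∧ F.Nontrivial) →
    ∑ F ∈ 𝒮, (F.ncard - 1) ≤ k)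

theorem stmt16 (N : ℕ) (hN : 2 ≤ N) (M : Set (EuclideanSpace ℝ (Fin N)))
    (hMne : M.Nonempty) (hMc : IsCompact M) (hMp : Perfect M)
    (hMtd : IsTotallyDisconnected M)
    (hGP : ∀ H : Submodule ℝ (EuclideanSpace ℝ (Fin N)), H ≠ ⊥ → H ≠ ⊤ →
      GenPosWrt (Module.finrank ℝ H) H M) :
    ∀ H : Submodule ℝ (EuclideanSpace ℝ (Fin N)), H ≠ ⊥ → H ≠ ⊤ →
      ((Hᗮ.orthogonalProjectionOnto '' M : Set Hᗮ).Nonempty ∧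
       IsCompact (Hᗮ.orthogonalProjectionOnto '' M : Set Hᗮ) ∧
       Perfect (Hᗮ.orthogonalProjectionOnto '' M : Set Hᗮ) ∧
       IsTotallyDisconnected (Hᗮ.orthogonalProjectionOnto '' M : Set Hᗮ)) := by
  intro H hb ht
  classical
  obtain ⟨GP1, GP2, -⟩ := hGP H hb ht
  set π : EuclideanSpace ℝ (Fin N) → Hᗮ := fun v => Hᗮ.orthogonalProjectionOnto v with hπ
  have hπc : Continuous π := (Hᗮ.orthogonalProjectionOnto).continuous
  set Q : Set Hᗮ := (Hᗮ.orthogonalProjectionOnto) '' M with hQ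
  -- every fiber is finite
  have hfib : ∀ A ∈ M, (projFiber H M A).Finite := by
    intro A hA
    by_cases hnt : (projFiber H M A).Nontrivial
    · exact finite_set_of_fin_dim_affineIndependent ℝ (GP2 A hA hnt).2
    · exact Set.Subsingleton.finite (Set.not_nontrivial_iff.mp hnt)
  have hfibsub : ∀ A, projFiber H M A ⊆ M := fun A B hB => hB.1
  -- the finite "singular" set
  set S : Set (EuclideanSpace ℝ (Fin N)) :=
    ⋃₀ {F | ∃ A ∈ M, F = projFiber H M A ∧ F.Nontrivial} with hSdef
  have hSfin : S.Finite := by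
    refine Set.Finite.sUnion GP1 ?_
    rintro F ⟨A, hA, rfl, -⟩
    exact hfib A hA
  have hSkey : ∀ a ∈ M, ∀ b ∈ M, a ≠ b → π a = π b → a ∈ S ∧ b ∈ S := by
    intro a ha b hb hne heq
    have hmem : projFiber H M a ∈ {F | ∃ A ∈ M, F = projFiber H M A ∧ F.Nontrivial} := by
      refine ⟨a, ha, rfl, b, ⟨hb, heq.symm⟩, a, ⟨ha, rfl⟩, fun h => hne h.symm⟩
    exact ⟨Set.mem_sUnion.mpr ⟨_, hmem, ha, rfl⟩,
      Set.mem_sUnion.mpr ⟨_, hmem, hb, heq.symm⟩⟩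
  refine ⟨hMne.image _, hMc.image hπc, ?_, ?_⟩
  · -- Perfect
    refine ⟨(hMc.image hπc).isClosed, ?_⟩
    intro x hx
    rw [accPt_iff_nhds]
    intro U hU
    by_contra hcon
    push_neg at hcon
    have hUQ : ∀ y ∈ U ∩ Q, y = x := fun y hy => by
      by_contra hne; exact hne (hcon y hy ▸ rfl)
    obtain ⟨A, hA, hAx⟩ := hx
    have hAe : π A = x := hAx
    have hfeq : M ∩ π ⁻¹' U = projFiber H M A := by
      ext c
      constructor
      · rintro ⟨hc, hcU⟩
        exact ⟨hc, (hUQ (π c) ⟨hcU, ⟨c, hc, rfl⟩⟩).trans hAe.symm⟩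
      · rintro ⟨hc, hce⟩
        refine ⟨hc, ?_⟩
        show π c ∈ U
        rw [show π c = x from hce.trans hAe]
        exact mem_of_mem_nhds hU
    have hFfin : (projFiber H M A).Finite := hfib A hA
    have hW : (π ⁻¹' U ∩ (projFiber H M A \ {A})ᶜ) ∈ nhds A := by
      refine Filter.inter_mem (hπc.continuousAt.preimage_mem_nhds (hAe ▸ hU)) ?_
      exact ((hFfin.diff (t := {A})).isClosed.isOpen_compl).mem_nhds (by simp)
    obtain ⟨y, ⟨⟨hyU, hyc⟩, hyM⟩, hyA⟩ := accPt_iff_nhds.mp (hMp.2 A hA) _ hW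
    have : y ∈ projFiber H M A := hfeq ▸ ⟨hyM, hyU⟩
    exact hyc ⟨this, hyA⟩
  · -- Totally disconnected
    haveI : CompactSpace M := isCompact_iff_compactSpace.mp hMc
    haveI : TotallyDisconnectedSpace M := totallyDisconnectedSpace_subtype_iff.mpr hMtd
    set f : M → Hᗮ := fun a => π a.1 with hf
    have hfc : Continuous f := hπc.comp continuous_subtype_val
    apply isTotallyDisconnected_of_isTotallySeparated
    intro x hx y hy hxy
    obtain ⟨A, hA, hAx⟩ := hx
    obtain ⟨B, hB, hBy⟩ := hy
    -- the finite set T in the subtype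
    set T : Set M := {a : M | (a : EuclideanSpace ℝ (Fin N)) ∈ S}
      ∪ {a : M | (a : EuclideanSpace ℝ (Fin N)) ∈ projFiber H M A}
      ∪ {a : M | (a : EuclideanSpace ℝ (Fin N)) ∈ projFiber H M B} with hT
    have hTfin : T.Finite := by
      refine (((hSfin.preimage ?_).union ((hfib A hA).preimage ?_)).union
        ((hfib B hB).preimage ?_)) <;>
      exact Set.injOn_of_injective Subtype.val_injective
    haveI : Finite T := hTfin.to_subtype
    -- clopen neighborhoods isolating points of T
    have hWex : ∀ t : T, ∃ W : Set M, IsClopen W ∧ (t : M) ∈ W ∧ W ∩ T ⊆ {(t : M)} := by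
      intro t
      have hop : IsOpen ((T \ {(t : M)})ᶜ) := (hTfin.diff (t := {(t : M)})).isClosed.isOpen_compl
      obtain ⟨W, hWc, hWm, hWs⟩ := compact_exists_isClopen_in_isOpen hop
        (by simp : (t : M) ∈ (T \ {(t : M)})ᶜ)
      refine ⟨W, hWc, hWm, ?_⟩
      intro a ⟨haW, haT⟩
      by_contra hne
      exact (hWs haW) ⟨haT, hne⟩
    choose W hWclopen hWmem hWsub using hWex
    set V : Set M := ⋃ t : T, if f (t : M) ≠ y then W t else ∅ with hV
    have hVclopen : IsClopen V := by
      apply isClopen_iUnion_of_finite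
      intro t
      split
      · exact hWclopen t
      · exact isClopen_empty
    -- membership criterion on T
    have hcrit : ∀ a : M, a ∈ T → (a ∈ V ↔ f a ≠ y) := by
      intro a ha
      constructor
      · intro haV
        obtain ⟨t, ht⟩ := Set.mem_iUnion.mp haV
        by_cases hc : f (t : M) ≠ y
        · rw [if_pos hc] at ht
          have : a = (t : M) := hWsub t ⟨ht, ha⟩
          rwa [this]
        · rw [if_neg hc] at ht; exact absurd ht (Set.notMem_empty a)
      · intro hfa
        exact Set.mem_iUnion.mpr ⟨⟨a, ha⟩, by rw [if_pos hfa]; exact hWmem ⟨a, ha⟩⟩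
    -- saturation
    have hsat : ∀ a b : M, f a = f b → (a ∈ V ↔ b ∈ V) := by
      intro a b heq
      by_cases hab : a = b
      · rw [hab]
      · have hne : (a : EuclideanSpace ℝ (Fin N)) ≠ (b : EuclideanSpace ℝ (Fin N)) :=
          fun h => hab (Subtype.ext h)
        obtain ⟨haS, hbS⟩ := hSkey a a.2 b b.2 hne heq
        rw [hcrit a (Or.inl (Or.inl haS)), hcrit b (Or.inl (Or.inl hbS)), heq]
    have hVcomp : IsCompact V := hVclopen.isClosed.isCompact
    have hVccomp : IsCompact Vᶜ := hVclopen.compl.isClosed.isCompact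
    set C : Set Hᗮ := f '' V with hC
    set D : Set Hᗮ := f '' Vᶜ with hD
    have hCc : IsCompact C := hVcomp.image hfc
    have hDc : IsCompact D := hVccomp.image hfc
    have hdisj : Disjoint C D := by
      rw [Set.disjoint_left]
      rintro z ⟨a, haV, rfl⟩ ⟨b, hbV, hba⟩
      exact hbV ((hsat a b hba.symm).mp haV)
    have hQsub : Q ⊆ C ∪ D := by
      rintro z ⟨c, hc, rfl⟩
      by_cases h : (⟨c, hc⟩ : M) ∈ V
      · exact Or.inl ⟨⟨c, hc⟩, h, rfl⟩
      · exact Or.inr ⟨⟨c, hc⟩, h, rfl⟩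
    have hxC : x ∈ C := by
      have haT : (⟨A, hA⟩ : M) ∈ T := Or.inl (Or.inr ⟨hA, rfl⟩)
      have : (⟨A, hA⟩ : M) ∈ V := (hcrit _ haT).mpr (by
        show π A ≠ y
        rw [show π A = x from hAx]; exact hxy)
      exact ⟨⟨A, hA⟩, this, hAx⟩
    have hyD : y ∈ D := by
      have haT : (⟨B, hB⟩ : M) ∈ T := Or.inr ⟨hB, rfl⟩
      have : (⟨B, hB⟩ : M) ∉ V := fun h => (hcrit _ haT).mp h hBy
      exact ⟨⟨B, hB⟩, this, hBy⟩
    obtain ⟨u, v, hu, hv, hCu, hDv, huv⟩ :=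
      SeparatedNhds.of_isCompact_isCompact hCc hDc hdisj
    exact ⟨u, v, hu, hv, hCu hxC, hDv hyD,
      hQsub.trans (Set.union_subset_union hCu hDv), huv⟩
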